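/- For P ∈ (0,1) and k > 0, the equation P^{1/k}·ln P = k·(1-P^{1/k})·ln(1-P^{1/k}) holds if and only if P^{1/k} = 1/2 (equivalently k = -ln P / ln 2). -/

import Mathlib

open Real Set

private noncomputable def phi : ℝ → ℝ := fun y => (1 - y) * Real.log (1 - y) - y * Real.log y

private lemma phi_hasDerivAt {x : ℝ} (hx0 : 0 < x) (hx1 : x < 1) :
    HasDerivAt phi (-(Real.log (1 - x)) - Real.log x - 2) x := by
  have h2 : HasDerivAt (fun y : ℝ => 1 - y) (-1) x := (hasDerivAt_id x).const_sub 1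
  have h3 : HasDerivAt (fun y : ℝ => y * Real.log y) (Real.log (1 - x) + 1) (1 - x) :=
    Real.hasDerivAt_mul_log (by linarith)
  have h1 : HasDerivAt (fun y : ℝ => y * Real.log y) (Real.log x + 1) x :=
    Real.hasDerivAt_mul_log hx0.ne'
  have := (h3.comp x h2).sub h1
  exact this.congr_deriv (by ring)

private noncomputable def psi : ℝ → ℝ := fun y => -(Real.log (1 - y)) - Real.log y - 2

private lemma psi_hasDerivAt {x : ℝ} (hx0 : 0 < x) (hx1 : x < 1) :
    HasDerivAt psi ((1 - x)⁻¹ - x⁻¹) x := by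
  have h2 : HasDerivAt (fun y : ℝ => 1 - y) (-1) x := (hasDerivAt_id x).const_sub 1
  have h3 : HasDerivAt Real.log (1 - x)⁻¹ (1 - x) := Real.hasDerivAt_log (by linarith)
  have h1 : HasDerivAt Real.log x⁻¹ x := Real.hasDerivAt_log hx0.ne'
  have := ((h3.comp x h2).neg.sub h1).sub_const 2
  exact this.congr_deriv (by ring)

private lemma phi_continuous : Continuous phi := by
  unfold phi
  exact (Real.continuous_mul_log.comp (continuous_const.sub continuous_id)).sub
    Real.continuous_mul_log

private lemma phi_concave : StrictConcaveOn ℝ (Set.Icc (0:ℝ) (1/2)) phi := by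
  apply strictConcaveOn_of_deriv2_neg (convex_Icc _ _) phi_continuous.continuousOn
  intro x hx
  rw [interior_Icc] at hx
  obtain ⟨hx0, hx1⟩ := hx
  have hx1' : x < 1 := by linarith
  have hderiv : ∀ y ∈ Set.Ioo (0:ℝ) (1/2), deriv phi y = psi y := by
    intro y hy
    exact (phi_hasDerivAt hy.1 (by linarith [hy.2])).deriv
  have hev : deriv phi =ᶠ[nhds x] psi :=
    Filter.eventuallyEq_of_mem (isOpen_Ioo.mem_nhds ⟨hx0, hx1⟩) hderiv
  have heq : deriv (deriv phi) x = deriv psi x := hev.deriv_eq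
  show deriv^[2] phi x < 0
  simp only [Function.iterate_succ, Function.iterate_zero, Function.comp_apply, id_eq]
  rw [heq, (psi_hasDerivAt hx0 hx1').deriv]
  have h1 : (1 - x)⁻¹ < x⁻¹ := by
    apply inv_strictAnti₀ hx0
    linarith
  linarith

private lemma phi_pos {x : ℝ} (hx0 : 0 < x) (hx1 : x < 1/2) : 0 < phi x := by
  have h0 : (0:ℝ) ∈ Set.Icc (0:ℝ) (1/2) := by constructor <;> norm_num
  have hh : (1/2:ℝ) ∈ Set.Icc (0:ℝ) (1/2) := by constructor <;> norm_num
  have ha : (0:ℝ) < 1 - 2*x := by linarith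
  have hb : (0:ℝ) < 2*x := by linarith
  have hab : (1 - 2*x) + 2*x = 1 := by ring
  have hcc := phi_concave.2 h0 hh (by norm_num) ha hb hab
  have hx : (1 - 2*x) • (0:ℝ) + (2*x) • (1/2:ℝ) = x := by
    simp only [smul_eq_mul]; ring
  rw [hx] at hcc
  have hphi0 : phi 0 = 0 := by simp [phi]
  have hphih : phi (1/2) = 0 := by simp only [phi]; norm_num
  rw [hphi0, hphih] at hcc
  simpa using hcc

private lemma eq_half {x : ℝ} (hx0 : 0 < x) (hx1 : x < 1)
    (h : x * Real.log x = (1 - x) * Real.log (1 - x)) : x = 1/2 := by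
  by_contra hne
  rcases lt_or_gt_of_ne hne with hlt | hgt
  · have key := phi_pos hx0 hlt
    simp only [phi] at key
    linarith
  · have h1 : 0 < 1 - x := by linarith
    have h2 : 1 - x < 1/2 := by linarith
    have key := phi_pos h1 h2
    simp only [phi, sub_sub_cancel] at key
    linarith

theorem stmt1 (P k : ℝ) (hP0 : 0 < P) (hP1 : P < 1) (hk : 0 < k) :
    (P ^ (1 / k) * Real.log P
        = k * (1 - P ^ (1 / k)) * Real.log (1 - P ^ (1 / k))
      ↔ P ^ (1 / k) = (1 / 2 : ℝ)) ∧
    (P ^ (1 / k) = (1 / 2 : ℝ) ↔ k = -Real.log P / Real.log 2) := by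
  set x := P ^ (1/k) with hxdef
  have hx0 : 0 < x := Real.rpow_pos_of_pos hP0 _
  have hx1 : x < 1 := Real.rpow_lt_one hP0.le hP1 (by positivity)
  have hlogx : Real.log x = (1/k) * Real.log P := Real.log_rpow hP0 _
  have hlogP : Real.log P = k * Real.log x := by
    rw [hlogx]; field_simp
  have hlogP_neg : Real.log P < 0 := Real.log_neg hP0 hP1
  have hlog2 : (0:ℝ) < Real.log 2 := Real.log_pos (by norm_num)
  constructor
  · constructor
    · intro h
      rw [hlogP] at h
      have h2 : k * (x * Real.log x) = k * ((1 - x) * Real.log (1 - x)) := by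
        linear_combination h
      have heq := mul_left_cancel₀ hk.ne' h2
      exact eq_half hx0 hx1 heq
    · intro h
      rw [hlogP, h]
      ring
  · constructor
    · intro h
      have hlx : Real.log x = -Real.log 2 := by
        rw [h, one_div, Real.log_inv]
      rw [hlogx] at hlx
      have hkP : Real.log P = -(k * Real.log 2) := by
        field_simp at hlx
        linarith
      rw [hkP]
      field_simp
    · intro h
      have hP' : Real.log P = -(k * Real.log 2) := by
        field_simp [hlog2.ne'] at h
        linarith
      have hlx : Real.log x = -Real.log 2 := by
        rw [hlogx, hP']
        field_simp
      have hxe : x = Real.exp (-Real.log 2) := by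
        rw [← hlx, Real.exp_log hx0]
      rw [hxe, ← Real.log_inv, Real.exp_log (by norm_num)]
      norm_num
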